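/- Let Y be a persistence module over a field K with a basis {y_1,…,y_N} realizing intervals whose critical values are pairwise distinct with pairwise distance greater than 2ε, and let X be a persistence module with a basis B_X = {x_1,…,x_{N+1}} realizing intervals [b_1,d_1),…,[b_N,d_N),[b,d), where the critical values b_1,…,b_N,d_1,…,d_N are pairwise distinct with pairwise distance greater than 2ε, |b_i − birth(y_i)| < ε and |d_i − death(y_i)| < ε for i ≤ N, the extra interval satisfies d − b < 2ε, and both b and d are at distance at least 2ε from every b_i and d_i. Suppose α : X → Y and β : Y → X form an ε-interleaving, and let B_Y be the extended basis {y_1,…,y_N, y_{N+1} = 0}. Then: (1) Mat_{B_X}^{B_Y}(α)(N+1, i) = 0 = Mat_{B_X}^{B_Y}(α)(i, N+1) for all i; (2) the restriction of Mat_{B_X}^{B_Y}(α) to the indices 1,…,N is a basis transformation matrix for Y, and for the extended basis B_Y^{new} obtained by applying this restricted matrix to {y_1,…,y_N} and keeping the zero element, Mat_{B_X}^{B_Y^{new}}(α) = diag(1,…,1,0) = Mat_{B_Y^{new}}^{B_X}(β); (3) symmetrically, the restriction of Mat_{B_Y}^{B_X}(β) to the indices 1,…,N is a basis transformation matrix with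 respect to {x_1,…,x_N}, and extending it by the entry 1 in position (N+1,N+1) yields a basis transformation matrix for X; for the resulting new basis B_X^{new}, Mat_{B_X^{new}}^{B_Y}(α) = diag(1,…,1,0) = Mat_{B_Y}^{B_X^{new}}(β). -/

import Mathlib

open scoped BigOperators

universe u v

/-- A persistence module over a field `K`. -/
structure PersistenceModule (K : Type u) [Field K] where
  space : ℝ → Type v
  [instAdd : ∀ t, AddCommGroup (space t)]
  [instMod : ∀ t, Module K (space t)]
  trans : ∀ s t : ℝ, s ≤ t → (space s →ₗ[K] space t)
  trans_self : ∀ (t : ℝ) (h : t ≤ t), trans t t h = LinearMap.id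
  trans_trans : ∀ (r s t : ℝ) (hrs : r ≤ s) (hst : s ≤ t) (x : space r),
      trans s t hst (trans r s hrs x) = trans r t (hrs.trans hst) x

attribute [instance] PersistenceModule.instAdd PersistenceModule.instMod

namespace PersistenceModule

variable {K : Type u} [Field K]

/-- `x ∈ X_t` is born at `t` if it is not in the image of any earlier transition map. -/
def BornAt (X : PersistenceModule K) (t : ℝ) (x : X.space t) : Prop :=
  ∀ (s : ℝ) (h : s < t), x ∉ Set.range (X.trans s t h.le)

/-- The death time of an element `x ∈ X_t`. -/
noncomputable def death (X : PersistenceModule K) (t : ℝ) (x : X.space t) : ℝ :=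
  sInf {s : ℝ | ∃ h : t < s, X.trans t s h.le x = 0}

/-- `x` is a basis of `X` realizing the intervals `[b i, d i)`. -/
def IsBasisFamily {ι : Type*} (X : PersistenceModule K) (b d : ι → ℝ)
    (x : ∀ i, X.space (b i)) : Prop :=
  (∀ i, X.BornAt (b i) (x i)) ∧
  (∀ i, X.death (b i) (x i) = d i) ∧
  (∀ t : ℝ,
    LinearIndependent K
      (fun i : {i : ι // b i ≤ t ∧ t < d i} => X.trans (b i.1) t i.2.1 (x i.1)) ∧
    Submodule.span K (Set.range
      (fun i : {i : ι // b i ≤ t ∧ t < d i} => X.trans (b i.1) t i.2.1 (x i.1))) = ⊤)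

open scoped Classical in
/-- The image of the basis element `x j` at height `h` (or `0` if not yet born). -/
noncomputable def pushTo {ι : Type*} (X : PersistenceModule K) (b : ι → ℝ)
    (x : ∀ i, X.space (b i)) (h : ℝ) (j : ι) : X.space h :=
  if hb : b j ≤ h then X.trans (b j) h hb (x j) else 0

end PersistenceModule

/-- An `ε`-morphism of persistence modules. -/
structure EpsMorphism {K : Type u} [Field K] (X Y : PersistenceModule K) (ε : ℝ) where
  maps : ∀ r r' : ℝ, r + ε = r' → (X.space r →ₗ[K] Y.space r')
  comm : ∀ (s t s' t' : ℝ) (hs : s + ε = s') (ht : t + ε = t') (hst : s ≤ t)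
      (x : X.space s),
    maps t t' ht (X.trans s t hst x) = Y.trans s' t' (by linarith) (maps s s' hs x)

/-- A pair of `ε`-morphisms forming an `ε`-interleaving. -/
def IsInterleaving {K : Type u} [Field K] (X Y : PersistenceModule K) (ε : ℝ)
    (F : EpsMorphism X Y ε) (G : EpsMorphism Y X ε) : Prop :=
  (∀ (r r'' : ℝ) (h : r + ε + ε = r'') (hr : r ≤ r'') (x : X.space r),
      G.maps (r + ε) r'' (by linarith) (F.maps r (r + ε) rfl x) = X.trans r r'' hr x) ∧
  (∀ (r r'' : ℝ) (h : r + ε + ε = r'') (hr : r ≤ r'') (y : Y.space r),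
      F.maps (r + ε) r'' (by linarith) (G.maps r (r + ε) rfl y) = Y.trans r r'' hr y)

/-- `A` is the matrix of the `ε`-morphism `α` with respect to the bases `x` of `X`
(realizing `[bX i, dX i)`) and `y` of `Y` (realizing `[bY j, dY j)`). -/
def IsMatrixOf {K : Type u} [Field K] {X Y : PersistenceModule K} {ε : ℝ}
    {N M : ℕ} (α : EpsMorphism X Y ε)
    (bX dX : Fin N → ℝ) (x : ∀ i, X.space (bX i))
    (bY dY : Fin M → ℝ) (y : ∀ j, Y.space (bY j))
    (A : Matrix (Fin M) (Fin N) K) : Prop :=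
  (∀ i, α.maps (bX i) (bX i + ε) rfl (x i)
      = ∑ j, A j i • Y.pushTo bY y (bX i + ε) j) ∧
  (∀ (j : Fin M) (i : Fin N), ¬ (bY j ≤ bX i + ε ∧ bX i + ε < dY j) → A j i = 0)

/-- A basis transformation matrix. -/
def IsBasisTransformMatrix {K : Type u} [Field K] {N : ℕ} (b d : Fin N → ℝ)
    (A : Matrix (Fin N) (Fin N) K) : Prop :=
  (∀ i, A i i ≠ 0) ∧ ∀ j i, A j i ≠ 0 → b j ≤ b i ∧ d j ≤ d i

/-- The transformed family `A(B)`: `x_i^new = ∑ j A j i • φ(x_j)`. -/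
noncomputable def transformBasis {K : Type u} [Field K] {N : ℕ} (X : PersistenceModule K)
    (b : Fin N → ℝ) (x : ∀ i, X.space (b i)) (A : Matrix (Fin N) (Fin N) K)
    (i : Fin N) : X.space (b i) :=
  ∑ j, A j i • X.pushTo b x (b i) j

/-- The elementary matrix `e_{lk}^μ`: identity with extra entry `μ` in position `(k, l)`. -/
def eMat {K : Type u} [Field K] {N : ℕ} (l k : Fin N) (μ : K) : Matrix (Fin N) (Fin N) K :=
  1 + Matrix.single k l μ

section Helpers

namespace PersistenceModule

variable {K : Type u} [Field K]

lemma pushTo_of_le {ι : Type*} (X : PersistenceModule K) (b : ι → ℝ)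
    (x : ∀ i, X.space (b i)) {t : ℝ} (j : ι) (hj : b j ≤ t) :
    X.pushTo b x t j = X.trans (b j) t hj (x j) := dif_pos hj

lemma pushTo_unborn {ι : Type*} (X : PersistenceModule K) (b : ι → ℝ)
    (x : ∀ i, X.space (b i)) {t : ℝ} (j : ι) (hj : t < b j) :
    X.pushTo b x t j = 0 := dif_neg (not_le.2 hj)

lemma trans_pushTo {ι : Type*} (X : PersistenceModule K) (b : ι → ℝ)
    (x : ∀ i, X.space (b i)) {s t : ℝ} (h : s ≤ t) (j : ι) (hj : b j ≤ s) :
    X.trans s t h (X.pushTo b x s j) = X.pushTo b x t j := by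
  rw [X.pushTo_of_le b x j hj, X.pushTo_of_le b x j (hj.trans h)]
  exact X.trans_trans _ _ _ hj h (x j)

lemma eq_zero_of_no_alive {ι : Type*} {X : PersistenceModule K} {b d : ι → ℝ}
    {x : ∀ i, X.space (b i)} (hX : X.IsBasisFamily b d x) {t : ℝ}
    (h : ∀ i, ¬ (b i ≤ t ∧ t < d i)) (v : X.space t) : v = 0 := by
  have hsp := (hX.2.2 t).2
  have hemp : IsEmpty {i : ι // b i ≤ t ∧ t < d i} := ⟨fun i => h i.1 i.2⟩
  rw [Set.range_eq_empty, Submodule.span_empty] at hsp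
  have hv : v ∈ (⊤ : Submodule K (X.space t)) := trivial
  rw [← hsp] at hv
  simpa using hv

lemma pushTo_dead {ι : Type*} [Fintype ι] {X : PersistenceModule K} {b d : ι → ℝ}
    {x : ∀ i, X.space (b i)} (hX : X.IsBasisFamily b d x)
    (hbd : ∀ i, b i < d i) {t : ℝ} (i : ι) (hi : d i < t) :
    X.pushTo b x t i = 0 := by
  haveI : Nonempty ι := ⟨i⟩
  have hbi : b i ≤ t := ((hbd i).trans hi).le
  set s0 : ℝ := max t (Finset.univ.sup' Finset.univ_nonempty d) + 1 with hs0
  have hts0 : t ≤ s0 - 1 := by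
    have := le_max_left t (Finset.univ.sup' Finset.univ_nonempty d); linarith
  have hds0 : ∀ k, d k ≤ s0 - 1 := by
    intro k
    have h1 : d k ≤ Finset.univ.sup' Finset.univ_nonempty d :=
      Finset.le_sup' d (Finset.mem_univ k)
    have := le_max_right t (Finset.univ.sup' Finset.univ_nonempty d); linarith
  have hno : ∀ k, ¬ (b k ≤ s0 ∧ s0 < d k) := by
    intro k ⟨_, h2⟩
    have := hds0 k; linarith
  have hz : X.trans (b i) s0 (by linarith) (x i) = 0 :=
    eq_zero_of_no_alive hX hno _
  have hmem : s0 ∈ {s : ℝ | ∃ h : b i < s, X.trans (b i) s h.le (x i) = 0} :=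
    ⟨by linarith, hz⟩
  have hinf : sInf {s : ℝ | ∃ h : b i < s, X.trans (b i) s h.le (x i) = 0} = d i :=
    hX.2.1 i
  obtain ⟨s, hsS, hst⟩ := exists_lt_of_csInf_lt ⟨s0, hmem⟩ (by rw [hinf]; exact hi)
  obtain ⟨hbis, hzero⟩ := hsS
  rw [X.pushTo_of_le b x i hbi, ← X.trans_trans (b i) s t hbis.le hst.le (x i), hzero,
    map_zero]

/-- Uniqueness of coefficients of alive basis elements, robust at death boundaries. -/
lemma coords {ι : Type*} [Fintype ι] {X : PersistenceModule K} {b d : ι → ℝ}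
    {x : ∀ i, X.space (b i)} (hX : X.IsBasisFamily b d x) (hbd : ∀ i, b i < d i)
    (c : ι → K) {t : ℝ}
    (h : ∑ k, c k • X.pushTo b x t k = 0) :
    ∀ k, b k ≤ t → t < d k → c k = 0 := by
  classical
  intro k hk1 hk2
  set s : Finset ℝ :=
    insert (t + 1) (((Finset.univ.image b ∪ Finset.univ.image d)).filter (fun r => t < r))
    with hs
  have hsne : s.Nonempty := ⟨t + 1, Finset.mem_insert_self _ _⟩
  set m : ℝ := s.min' hsne with hm
  have hsgt : ∀ r ∈ s, t < r := by
    intro r hr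
    rcases Finset.mem_insert.mp hr with h1 | h1
    · subst h1; linarith
    · exact (Finset.mem_filter.mp h1).2
  have hmgt : t < m := hsgt _ (s.min'_mem hsne)
  set t' : ℝ := (t + m) / 2 with ht'
  have htt' : t < t' := by rw [ht']; linarith
  have ht'm : t' < m := by rw [ht']; linarith
  have hble : ∀ l, t < b l → m ≤ b l := by
    intro l hl
    apply Finset.min'_le
    rw [hs]
    exact Finset.mem_insert_of_mem (Finset.mem_filter.mpr
      ⟨Finset.mem_union_left _ (Finset.mem_image_of_mem b (Finset.mem_univ l)), hl⟩)
  have hdle : ∀ l, t < d l → m ≤ d l := by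
    intro l hl
    apply Finset.min'_le
    rw [hs]
    exact Finset.mem_insert_of_mem (Finset.mem_filter.mpr
      ⟨Finset.mem_union_right _ (Finset.mem_image_of_mem d (Finset.mem_univ l)), hl⟩)
  -- push the relation to time t'
  have h' : ∑ l, c l • X.pushTo b x t' l = 0 := by
    have := congrArg (X.trans t t' htt'.le) h
    rw [map_sum, map_zero] at this
    rw [← this]
    refine Finset.sum_congr rfl (fun l _ => ?_)
    rw [LinearMap.map_smul]
    by_cases hbl : b l ≤ t
    · rw [X.trans_pushTo b x htt'.le l hbl]
    · push_neg at hbl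
      rw [X.pushTo_unborn b x l hbl, X.pushTo_unborn b x l (ht'm.trans_le (hble l hbl)),
        map_zero]
  -- restrict to alive indices at t'
  have hli := (hX.2.2 t').1
  have hfil : ∑ l ∈ Finset.univ.filter (fun i => b i ≤ t' ∧ t' < d i),
      c l • X.pushTo b x t' l = 0 := by
    rw [Finset.sum_subset (Finset.filter_subset _ _) ?_]
    · exact h'
    · intro l _ hl
      rw [Finset.mem_filter] at hl
      push_neg at hl
      by_cases hbl : b l ≤ t'
      · have hdl : d l ≤ t' := hl (Finset.mem_univ l) hbl
        have hdlt : d l ≤ t := by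
          by_contra hc
          push_neg at hc
          exact absurd hdl (not_le.2 ((ht'm.trans_le (hdle l hc))))
        rw [X.pushTo_dead hX hbd l (hdlt.trans_lt htt'), smul_zero]
      · push_neg at hbl
        rw [X.pushTo_unborn b x l hbl, smul_zero]
  have hsub : (∑ l : {i : ι // b i ≤ t' ∧ t' < d i},
      c l.1 • X.trans (b l.1) t' l.2.1 (x l.1)) = 0 := by
    have e1 : ∑ l ∈ Finset.univ.filter (fun i => b i ≤ t' ∧ t' < d i),
        c l • X.pushTo b x t' l
        = ∑ l : {i : ι // b i ≤ t' ∧ t' < d i}, c l.1 • X.pushTo b x t' l.1 :=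
      Finset.sum_subtype (p := fun i => b i ≤ t' ∧ t' < d i) _ (fun i => by simp) _
    rw [← hfil, e1]
    exact Finset.sum_congr rfl (fun l _ => by rw [X.pushTo_of_le b x l.1 l.2.1])
  have halive : b k ≤ t' ∧ t' < d k :=
    ⟨hk1.trans htt'.le, ht'm.trans_le (hdle k hk2)⟩
  have := Fintype.linearIndependent_iff.mp hli (fun l => c l.1) hsub ⟨k, halive⟩
  exact this

end PersistenceModule

end Helpers

section Statement9

variable {K : Type u} [Field K] {N : ℕ}

/-- `A` is the matrix of the `ε`-morphism `F : X → Y` with respect to the basis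
`x` of `X` (of size `N+1`) and the extended basis of `Y` consisting of the basis `y`
(of size `N`, reindexed along `Fin.castSucc`) together with a zero element at the last
index.  The row at the index of the zero element is zero by convention. -/
def IsExtMatrixXY (X Y : PersistenceModule K) (ε : ℝ)
    (bX : Fin (N + 1) → ℝ) (bY dY : Fin N → ℝ)
    (x : ∀ i, X.space (bX i)) (y : ∀ j, Y.space (bY j))
    (F : EpsMorphism X Y ε) (A : Matrix (Fin (N + 1)) (Fin (N + 1)) K) : Prop :=
  (∀ i, F.maps (bX i) (bX i + ε) rfl (x i)
      = ∑ j : Fin N, A j.castSucc i • Y.pushTo bY y (bX i + ε) j) ∧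
  (∀ (j : Fin N) (i : Fin (N + 1)),
      ¬ (bY j ≤ bX i + ε ∧ bX i + ε < dY j) → A j.castSucc i = 0) ∧
  (∀ i, A (Fin.last N) i = 0)

/-- `B` is the matrix of the `ε`-morphism `G : Y → X` with respect to the extended basis of
`Y` (basis `y` of size `N` plus a zero element at the last index) and the basis `x` of `X`
(of size `N+1`).  The column at the index of the zero element is zero by convention. -/
def IsExtMatrixYX (X Y : PersistenceModule K) (ε : ℝ)
    (bX dX : Fin (N + 1) → ℝ) (bY : Fin N → ℝ)
    (x : ∀ i, X.space (bX i)) (y : ∀ j, Y.space (bY j))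
    (G : EpsMorphism Y X ε) (B : Matrix (Fin (N + 1)) (Fin (N + 1)) K) : Prop :=
  (∀ j : Fin N, G.maps (bY j) (bY j + ε) rfl (y j)
      = ∑ i : Fin (N + 1), B i j.castSucc • X.pushTo bX x (bY j + ε) i) ∧
  (∀ (i : Fin (N + 1)) (j : Fin N),
      ¬ (bX i ≤ bY j + ε ∧ bY j + ε < dX i) → B i j.castSucc = 0) ∧
  (∀ i, B i (Fin.last N) = 0)

open scoped Classical in
/-- Replace the last row and column of `B` by those of the identity matrix. -/
noncomputable def extendOne (B : Matrix (Fin (N + 1)) (Fin (N + 1)) K) :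
    Matrix (Fin (N + 1)) (Fin (N + 1)) K :=
  fun i j => if i = Fin.last N ∨ j = Fin.last N then (if i = j then 1 else 0) else B i j

open scoped Classical in
/-- The diagonal matrix `diag(1, …, 1, 0)`. -/
noncomputable def diagOneZero : Matrix (Fin (N + 1)) (Fin (N + 1)) K :=
  Matrix.diagonal fun i => if i = Fin.last N then 0 else 1

/-- (Proposition `newinterval`.) `X` has one extra short interval `[b, d)`
(with `d - b < 2ε`, far from all other critical values) compared with `Y`; with respect to the
extended bases, the matrix of `α` has zero last row and column, its restriction is a basis
transformation matrix for `Y`, after transforming, `Mat(α) = diag(1,…,1,0) = Mat(β)`; and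
symmetrically for the matrix of `β` acting on the basis of `X`. -/
theorem statement9
    (X Y : PersistenceModule K) (ε : ℝ) (hε : 0 ≤ ε)
    (bX dX : Fin (N + 1) → ℝ) (bY dY : Fin N → ℝ)
    (x : ∀ i, X.space (bX i)) (y : ∀ j, Y.space (bY j))
    (hbdX : ∀ i, bX i < dX i) (hbdY : ∀ j, bY j < dY j)
    (hdistX : Function.Injective fun i => (bX i, dX i))
    (hdistY : Function.Injective fun j => (bY j, dY j))
    (hX : X.IsBasisFamily bX dX x) (hY : Y.IsBasisFamily bY dY y)
    -- critical values of `Y` pairwise distinct, with gaps `> 2ε`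
    (hgapY : ∀ p q : Fin N ⊕ Fin N, p ≠ q →
        2 * ε < |Sum.elim bY dY p - Sum.elim bY dY q|)
    -- critical values of the first `N` intervals of `X` pairwise distinct, with gaps `> 2ε`
    (hgapX : ∀ p q : Fin N ⊕ Fin N, p ≠ q →
        2 * ε < |Sum.elim (fun i => bX i.castSucc) (fun i => dX i.castSucc) p -
                 Sum.elim (fun i => bX i.castSucc) (fun i => dX i.castSucc) q|)
    (hb : ∀ i : Fin N, |bX i.castSucc - bY i| < ε)
    (hd : ∀ i : Fin N, |dX i.castSucc - dY i| < ε)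
    -- the extra interval `[b, d) = [bX (last), dX (last))` is short
    (hsmall : dX (Fin.last N) - bX (Fin.last N) < 2 * ε)
    -- and far from all other critical values of `X`
    (hfarb : ∀ i : Fin N, 2 * ε ≤ |bX (Fin.last N) - bX i.castSucc| ∧
        2 * ε ≤ |bX (Fin.last N) - dX i.castSucc|)
    (hfard : ∀ i : Fin N, 2 * ε ≤ |dX (Fin.last N) - bX i.castSucc| ∧
        2 * ε ≤ |dX (Fin.last N) - dX i.castSucc|)
    (F : EpsMorphism X Y ε) (G : EpsMorphism Y X ε)
    (hFG : IsInterleaving X Y ε F G)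
    (A B : Matrix (Fin (N + 1)) (Fin (N + 1)) K)
    (hA : IsExtMatrixXY X Y ε bX bY dY x y F A)
    (hB : IsExtMatrixYX X Y ε bX dX bY x y G B) :
    -- (1)
    (∀ i, A i (Fin.last N) = 0 ∧ A (Fin.last N) i = 0) ∧
    -- (2)
    (IsBasisTransformMatrix bY dY (A.submatrix Fin.castSucc Fin.castSucc) ∧
      IsExtMatrixXY X Y ε bX bY dY x
        (transformBasis Y bY y (A.submatrix Fin.castSucc Fin.castSucc)) F diagOneZero ∧
      IsExtMatrixYX X Y ε bX dX bY x
        (transformBasis Y bY y (A.submatrix Fin.castSucc Fin.castSucc)) G diagOneZero) ∧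
    -- (3)
    (IsBasisTransformMatrix (fun i : Fin N => bX i.castSucc) (fun i : Fin N => dX i.castSucc)
        (B.submatrix Fin.castSucc Fin.castSucc) ∧
      IsBasisTransformMatrix bX dX (extendOne B) ∧
      IsExtMatrixXY X Y ε bX bY dY (transformBasis X bX x (extendOne B)) y F diagOneZero ∧
      IsExtMatrixYX X Y ε bX dX bY (transformBasis X bX x (extendOne B)) y G diagOneZero) := by
  classical
  have hεpos : 0 < ε := by have h1 := hbdX (Fin.last N); linarith
  -- numeric unpacking
  have hb1 : ∀ i : Fin N, bX i.castSucc < bY i + ε := fun i => by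
    have h := abs_lt.mp (hb i); linarith [h.2]
  have hb2 : ∀ i : Fin N, bY i < bX i.castSucc + ε := fun i => by
    have h := abs_lt.mp (hb i); linarith [h.1]
  have hd1 : ∀ i : Fin N, dX i.castSucc < dY i + ε := fun i => by
    have h := abs_lt.mp (hd i); linarith [h.2]
  have hd2 : ∀ i : Fin N, dY i < dX i.castSucc + ε := fun i => by
    have h := abs_lt.mp (hd i); linarith [h.1]
  have gYbb : ∀ j k : Fin N, j ≠ k → 2*ε < |bY j - bY k| := fun j k h =>
    hgapY (Sum.inl j) (Sum.inl k) (by simpa using h)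
  have gYbd : ∀ j k : Fin N, 2*ε < |bY j - dY k| := fun j k =>
    hgapY (Sum.inl j) (Sum.inr k) (by simp)
  have gYdd : ∀ j k : Fin N, j ≠ k → 2*ε < |dY j - dY k| := fun j k h =>
    hgapY (Sum.inr j) (Sum.inr k) (by simpa using h)
  have gXbb : ∀ j k : Fin N, j ≠ k → 2*ε < |bX j.castSucc - bX k.castSucc| := fun j k h =>
    hgapX (Sum.inl j) (Sum.inl k) (by simpa using h)
  have gXbd : ∀ j k : Fin N, 2*ε < |bX j.castSucc - dX k.castSucc| := fun j k =>
    hgapX (Sum.inl j) (Sum.inr k) (by simp)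
  have gXdd : ∀ j k : Fin N, j ≠ k → 2*ε < |dX j.castSucc - dX k.castSucc| := fun j k h =>
    hgapX (Sum.inr j) (Sum.inr k) (by simpa using h)
  have n1 : ∀ i : Fin N, bX i.castSucc + 2*ε < dX i.castSucc := fun i => by
    have h := gXbd i i; have h2 := hbdX i.castSucc
    rcases abs_cases (bX i.castSucc - dX i.castSucc) with ⟨e1,e2⟩|⟨e1,e2⟩ <;> linarith
  have n2 : ∀ j : Fin N, bY j + 2*ε < dY j := fun j => by
    have h := gYbd j j; have h2 := hbdY j
    rcases abs_cases (bY j - dY j) with ⟨e1,e2⟩|⟨e1,e2⟩ <;> linarith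
  have mYbXb : ∀ j i : Fin N, j ≠ i → ε < |bY j - bX i.castSucc| := fun j i hne => by
    have h1 := gXbb j i hne; have h2 := abs_lt.mp (hb j)
    rcases abs_cases (bX j.castSucc - bX i.castSucc) with ⟨e1,e2⟩|⟨e1,e2⟩ <;>
      rcases abs_cases (bY j - bX i.castSucc) with ⟨f1,f2⟩|⟨f1,f2⟩ <;> linarith
  have mYdXb : ∀ j i : Fin N, ε < |dY j - bX i.castSucc| := fun j i => by
    have h1 := gXbd i j; have h2 := abs_lt.mp (hd j)
    rcases abs_cases (bX i.castSucc - dX j.castSucc) with ⟨e1,e2⟩|⟨e1,e2⟩ <;>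
      rcases abs_cases (dY j - bX i.castSucc) with ⟨f1,f2⟩|⟨f1,f2⟩ <;> linarith
  have mYbXd : ∀ j i : Fin N, ε < |bY j - dX i.castSucc| := fun j i => by
    have h1 := gXbd j i; have h2 := abs_lt.mp (hb j)
    rcases abs_cases (bX j.castSucc - dX i.castSucc) with ⟨e1,e2⟩|⟨e1,e2⟩ <;>
      rcases abs_cases (bY j - dX i.castSucc) with ⟨f1,f2⟩|⟨f1,f2⟩ <;> linarith
  have mYdXd : ∀ j i : Fin N, j ≠ i → ε < |dY j - dX i.castSucc| := fun j i hne => by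
    have h1 := gXdd j i hne; have h2 := abs_lt.mp (hd j)
    rcases abs_cases (dX j.castSucc - dX i.castSucc) with ⟨e1,e2⟩|⟨e1,e2⟩ <;>
      rcases abs_cases (dY j - dX i.castSucc) with ⟨f1,f2⟩|⟨f1,f2⟩ <;> linarith
  have mBbY : ∀ j : Fin N, ε < |bX (Fin.last N) - bY j| := fun j => by
    have h1 := (hfarb j).1; have h2 := abs_lt.mp (hb j)
    rcases abs_cases (bX (Fin.last N) - bX j.castSucc) with ⟨e1,e2⟩|⟨e1,e2⟩ <;>
      rcases abs_cases (bX (Fin.last N) - bY j) with ⟨f1,f2⟩|⟨f1,f2⟩ <;> linarith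
  -- support conditions
  have hAsupp : ∀ (j : Fin N) (i : Fin (N+1)), A j.castSucc i ≠ 0 →
      bY j ≤ bX i + ε ∧ bX i + ε < dY j := fun j i h => by
    by_contra hc; exact h (hA.2.1 j i hc)
  have hBsupp : ∀ (i : Fin (N+1)) (j : Fin N), B i j.castSucc ≠ 0 →
      bX i ≤ bY j + ε ∧ bY j + ε < dX i := fun i j h => by
    by_contra hc; exact h (hB.2.1 i j hc)
  have hBlast : ∀ j : Fin N, B (Fin.last N) j.castSucc = 0 := by
    intro j
    apply hB.2.1
    rintro ⟨h1, h2⟩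
    have h3 := mBbY j
    rcases abs_cases (bX (Fin.last N) - bY j) with ⟨e1,e2⟩|⟨e1,e2⟩ <;> linarith [hsmall]
  -- the composite relations
  have hC1 : ∀ (i k : Fin (N+1)), bX k ≤ bX i + ε + ε → bX i + ε + ε < dX k →
      (∑ j : Fin N, A j.castSucc i * B k j.castSucc) = if k = i then 1 else 0 := by
    intro i k hk1 hk2
    have h2 := hFG.1 (bX i) (bX i + ε + ε) rfl (by linarith) (x i)
    rw [hA.1 i, map_sum] at h2
    have hterm : ∀ j : Fin N,
        G.maps (bX i + ε) (bX i + ε + ε) (by linarith)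
          (A j.castSucc i • Y.pushTo bY y (bX i + ε) j)
        = ∑ m : Fin (N+1), (A j.castSucc i * B m j.castSucc) •
            X.pushTo bX x (bX i + ε + ε) m := by
      intro j
      rw [LinearMap.map_smul]
      by_cases hA0 : A j.castSucc i = 0
      · simp [hA0]
      · have hs := (hAsupp j i hA0).1
        rw [Y.pushTo_of_le bY y j hs]
        rw [G.comm (bY j) (bX i + ε) (bY j + ε) (bX i + ε + ε) rfl rfl hs (y j)]
        rw [hB.1 j, map_sum, Finset.smul_sum]
        refine Finset.sum_congr rfl (fun m _ => ?_)
        rw [LinearMap.map_smul]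
        by_cases hB0 : B m j.castSucc = 0
        · simp [hB0]
        · rw [X.trans_pushTo bX x (by linarith) m (hBsupp m j hB0).1, smul_smul]
    have h3 : (∑ j : Fin N, G.maps (bX i + ε) (bX i + ε + ε) (by linarith)
        (A j.castSucc i • Y.pushTo bY y (bX i + ε) j))
        = ∑ m : Fin (N+1), (∑ j : Fin N, A j.castSucc i * B m j.castSucc) •
            X.pushTo bX x (bX i + ε + ε) m := by
      rw [Finset.sum_congr rfl (fun j _ => hterm j), Finset.sum_comm]
      exact Finset.sum_congr rfl (fun m _ => (Finset.sum_smul).symm)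
    have e1 : X.pushTo bX x (bX i + ε + ε) i
        = ∑ m : Fin (N+1), (∑ j : Fin N, A j.castSucc i * B m j.castSucc) •
            X.pushTo bX x (bX i + ε + ε) m := by
      rw [X.pushTo_of_le bX x i (by linarith), ← h2, h3]
    have hzero : ∑ m : Fin (N+1),
        ((∑ j : Fin N, A j.castSucc i * B m j.castSucc) - if m = i then 1 else 0) •
          X.pushTo bX x (bX i + ε + ε) m = 0 := by
      have e2 : ∑ m : Fin (N+1), (if m = i then (1:K) else 0) •
          X.pushTo bX x (bX i + ε + ε) m = X.pushTo bX x (bX i + ε + ε) i := by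
        simp
      simp only [sub_smul, Finset.sum_sub_distrib, e2]
      rw [← e1, sub_self]
    exact sub_eq_zero.mp (PersistenceModule.coords hX hbdX _ hzero k hk1 hk2)
  have hC2 : ∀ (j l : Fin N), bY l ≤ bY j + ε + ε → bY j + ε + ε < dY l →
      (∑ i : Fin (N+1), B i j.castSucc * A l.castSucc i) = if l = j then 1 else 0 := by
    intro j l hl1 hl2
    have h2 := hFG.2 (bY j) (bY j + ε + ε) rfl (by linarith) (y j)
    rw [hB.1 j, map_sum] at h2
    have hterm : ∀ i : Fin (N+1),
        F.maps (bY j + ε) (bY j + ε + ε) (by linarith)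
          (B i j.castSucc • X.pushTo bX x (bY j + ε) i)
        = ∑ l' : Fin N, (B i j.castSucc * A l'.castSucc i) •
            Y.pushTo bY y (bY j + ε + ε) l' := by
      intro i
      rw [LinearMap.map_smul]
      by_cases hB0 : B i j.castSucc = 0
      · simp [hB0]
      · have hs := (hBsupp i j hB0).1
        rw [X.pushTo_of_le bX x i hs]
        rw [F.comm (bX i) (bY j + ε) (bX i + ε) (bY j + ε + ε) rfl rfl hs (x i)]
        rw [hA.1 i, map_sum, Finset.smul_sum]
        refine Finset.sum_congr rfl (fun l' _ => ?_)
        rw [LinearMap.map_smul]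
        by_cases hA0 : A l'.castSucc i = 0
        · simp [hA0]
        · rw [Y.trans_pushTo bY y (by linarith) l' (hAsupp l' i hA0).1, smul_smul]
    have h3 : (∑ i : Fin (N+1), F.maps (bY j + ε) (bY j + ε + ε) (by linarith)
        (B i j.castSucc • X.pushTo bX x (bY j + ε) i))
        = ∑ l' : Fin N, (∑ i : Fin (N+1), B i j.castSucc * A l'.castSucc i) •
            Y.pushTo bY y (bY j + ε + ε) l' := by
      rw [Finset.sum_congr rfl (fun i _ => hterm i), Finset.sum_comm]
      exact Finset.sum_congr rfl (fun l' _ => (Finset.sum_smul).symm)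
    have e1 : Y.pushTo bY y (bY j + ε + ε) j
        = ∑ l' : Fin N, (∑ i : Fin (N+1), B i j.castSucc * A l'.castSucc i) •
            Y.pushTo bY y (bY j + ε + ε) l' := by
      rw [Y.pushTo_of_le bY y j (by linarith), ← h2, h3]
    have hzero : ∑ l' : Fin N,
        ((∑ i : Fin (N+1), B i j.castSucc * A l'.castSucc i) - if l' = j then 1 else 0) •
          Y.pushTo bY y (bY j + ε + ε) l' = 0 := by
      have e2 : ∑ l' : Fin N, (if l' = j then (1:K) else 0) •
          Y.pushTo bY y (bY j + ε + ε) l' = Y.pushTo bY y (bY j + ε + ε) j := by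
        simp
      simp only [sub_smul, Finset.sum_sub_distrib, e2]
      rw [← e1, sub_self]
    exact sub_eq_zero.mp (PersistenceModule.coords hY hbdY _ hzero l hl1 hl2)
  -- diagonal products
  have hBA : ∀ j : Fin N, B j.castSucc j.castSucc * A j.castSucc j.castSucc = 1 := by
    intro j
    have h := hC2 j j (by linarith) (by linarith [n2 j])
    rw [if_pos rfl] at h
    rw [← h, Finset.sum_eq_single j.castSucc ?_ ?_]
    · intro i _ hne
      refine Fin.lastCases ?_ (fun m => ?_) i hne
      · intro _; rw [hBlast j, zero_mul]
      · intro hne'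
        have hmj : m ≠ j := fun hmj => hne' (by rw [hmj])
        by_cases hA0 : A j.castSucc m.castSucc = 0
        · rw [hA0, mul_zero]
        · by_cases hB0 : B m.castSucc j.castSucc = 0
          · rw [hB0, zero_mul]
          · exfalso
            have h1 := (hAsupp j m.castSucc hA0).1
            have h2 := (hBsupp m.castSucc j hB0).1
            have h3 := mYbXb j m (fun hjm => hmj hjm.symm)
            rcases abs_cases (bY j - bX m.castSucc) with ⟨e1,e2⟩|⟨e1,e2⟩ <;> linarith
    · intro h'; exact absurd (Finset.mem_univ _) h'
  have hAdiag : ∀ j : Fin N, A j.castSucc j.castSucc ≠ 0 :=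
    fun j => right_ne_zero_of_mul_eq_one (hBA j)
  have hBdiag : ∀ j : Fin N, B j.castSucc j.castSucc ≠ 0 :=
    fun j => left_ne_zero_of_mul_eq_one (hBA j)
  -- the last column of A vanishes
  have hAlast : ∀ j : Fin N, A j.castSucc (Fin.last N) = 0 := by
    by_contra hc
    push_neg at hc
    obtain ⟨j0, hj0⟩ := hc
    have hSne : (Finset.univ.filter
        (fun j : Fin N => A j.castSucc (Fin.last N) ≠ 0)).Nonempty :=
      ⟨j0, Finset.mem_filter.mpr ⟨Finset.mem_univ _, hj0⟩⟩
    obtain ⟨jm, hjmem, hjmax⟩ := Finset.exists_max_image _ bY hSne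
    have hjm : A jm.castSucc (Fin.last N) ≠ 0 := (Finset.mem_filter.mp hjmem).2
    have hsupp := hAsupp jm (Fin.last N) hjm
    have halive1 : bX jm.castSucc ≤ bX (Fin.last N) + ε + ε := by
      have := hb1 jm; linarith [hsupp.1]
    have halive2 : bX (Fin.last N) + ε + ε < dX jm.castSucc := by
      have h1 : bX (Fin.last N) < dX jm.castSucc := by have := hd2 jm; linarith [hsupp.2]
      have h2 := (hfard jm).2
      have h3 := hbdX (Fin.last N)
      rcases abs_cases (dX (Fin.last N) - dX jm.castSucc) with ⟨e1,e2⟩|⟨e1,e2⟩ <;> linarith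
    have hrel := hC1 (Fin.last N) jm.castSucc halive1 halive2
    rw [if_neg (Fin.castSucc_lt_last jm).ne, Finset.sum_eq_single jm ?_ ?_] at hrel
    · exact hjm ((mul_eq_zero.mp hrel).resolve_right (hBdiag jm))
    · intro j _ hne
      by_cases hA0 : A j.castSucc (Fin.last N) = 0
      · rw [hA0, zero_mul]
      · by_cases hB0 : B jm.castSucc j.castSucc = 0
        · rw [hB0, mul_zero]
        · exfalso
          have h1 := (hBsupp jm.castSucc j hB0).1
          have h2 := mYbXb j jm hne
          have h3 := hjmax j (Finset.mem_filter.mpr ⟨Finset.mem_univ _, hA0⟩)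
          have h4 := hb2 jm
          rcases abs_cases (bY j - bX jm.castSucc) with ⟨e1,e2⟩|⟨e1,e2⟩ <;> linarith
    · intro h'; exact absurd (Finset.mem_univ _) h'
  -- two "dead zone" facts
  have hZ : ∀ (j : Fin N) (i : Fin (N+1)), bX i ≤ bY j + ε →
      dX i ≤ bX j.castSucc + ε + ε → dX i < bY j + ε := by
    intro j i
    refine Fin.lastCases ?_ (fun m => ?_) i
    · intro h1 h2
      have h3 := (hfard j).1
      have h5 := hbdX (Fin.last N)
      have h6 := hb1 j
      rcases abs_cases (dX (Fin.last N) - bX j.castSucc) with ⟨e1,e2⟩|⟨e1,e2⟩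
      · rcases abs_cases (bX (Fin.last N) - bX j.castSucc) with ⟨f1,f2⟩|⟨f1,f2⟩ <;>
          [linarith [(hfarb j).1]; linarith [(hfarb j).1, hsmall]]
      · linarith
    · intro h1 h2
      have h3 := gXbd j m
      have h4 := hb1 j
      rcases abs_cases (bX j.castSucc - dX m.castSucc) with ⟨e1,e2⟩|⟨e1,e2⟩ <;> linarith
  have hZ' : ∀ (k l : Fin N), bY l ≤ bX k.castSucc + ε →
      dY l ≤ bY k + ε + ε → dY l < bX k.castSucc + ε := by
    intro k l h1 h2
    have h3 := mYdXb l k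
    have h4 := gYbd k l
    rcases abs_cases (dY l - bX k.castSucc) with ⟨e1,e2⟩|⟨e1,e2⟩
    · rcases abs_cases (bY k - dY l) with ⟨f1,f2⟩|⟨f1,f2⟩ <;> linarith [hb2 k]
    · linarith
  -- birth / death ordering
  have hAbirth : ∀ j i : Fin N, A j.castSucc i.castSucc ≠ 0 → bY j ≤ bY i := by
    intro j i h0
    by_cases hji : j = i
    · rw [hji]
    · have h1 := (hAsupp j i.castSucc h0).1
      have h2 := mYbXb j i hji
      have h3 := hb1 i
      rcases abs_cases (bY j - bX i.castSucc) with ⟨e1,e2⟩|⟨e1,e2⟩ <;> linarith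
  have hBbirth : ∀ j i : Fin N, B j.castSucc i.castSucc ≠ 0 →
      bX j.castSucc ≤ bX i.castSucc := by
    intro j i h0
    by_cases hji : j = i
    · rw [hji]
    · have h1 := (hBsupp j.castSucc i h0).1
      have h2 := mYbXb i j (fun h => hji h.symm)
      have h3 := hb2 i
      rcases abs_cases (bY i - bX j.castSucc) with ⟨e1,e2⟩|⟨e1,e2⟩ <;> linarith
  have hAdeath : ∀ j i : Fin N, A j.castSucc i.castSucc ≠ 0 → dY j ≤ dY i := by
    intro j i h0
    by_contra hgt
    push_neg at hgt
    have hji : j ≠ i := fun h => by rw [h] at hgt; exact lt_irrefl _ hgt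
    have hbig : dY i + 2*ε < dY j := by
      have hgap := gYdd j i hji
      rcases abs_cases (dY j - dY i) with ⟨e1,e2⟩|⟨e1,e2⟩ <;> linarith
    set t : ℝ := (dX i.castSucc + dY j - ε)/2 with ht
    have h1 : dX i.castSucc < t := by rw [ht]; linarith [hd1 i]
    have h2 : t + ε < dY j := by rw [ht]; linarith [hd1 i]
    have h0' : bX i.castSucc ≤ t := le_of_lt ((hbdX i.castSucc).trans h1)
    have hdead : X.pushTo bX x t i.castSucc = 0 :=
      PersistenceModule.pushTo_dead hX hbdX i.castSucc h1
    have hzero : ∑ l : Fin N, A l.castSucc i.castSucc • Y.pushTo bY y (t + ε) l = 0 := by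
      have e0 := F.comm (bX i.castSucc) t (bX i.castSucc + ε) (t + ε) rfl rfl h0'
        (x i.castSucc)
      rw [hA.1 i.castSucc, map_sum] at e0
      have e1 : F.maps t (t + ε) rfl (X.trans (bX i.castSucc) t h0' (x i.castSucc)) = 0 := by
        rw [← X.pushTo_of_le bX x i.castSucc h0', hdead, map_zero]
      rw [e1] at e0
      have e2 : ∀ l : Fin N, Y.trans (bX i.castSucc + ε) (t + ε) (by linarith)
          (A l.castSucc i.castSucc • Y.pushTo bY y (bX i.castSucc + ε) l)
          = A l.castSucc i.castSucc • Y.pushTo bY y (t + ε) l := by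
        intro l
        rw [LinearMap.map_smul]
        by_cases hA0 : A l.castSucc i.castSucc = 0
        · simp [hA0]
        · rw [Y.trans_pushTo bY y (by linarith) l (hAsupp l i.castSucc hA0).1]
      rw [Finset.sum_congr rfl (fun l _ => e2 l)] at e0
      exact e0.symm
    exact h0 (PersistenceModule.coords hY hbdY _ hzero j
      (by have := (hAsupp j i.castSucc h0).1; have := hbdX i.castSucc; linarith) h2)
  have hBdeath : ∀ j i : Fin N, B j.castSucc i.castSucc ≠ 0 →
      dX j.castSucc ≤ dX i.castSucc := by
    intro j i h0
    by_contra hgt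
    push_neg at hgt
    have hji : j ≠ i := fun h => by rw [h] at hgt; exact lt_irrefl _ hgt
    have hbig : dX i.castSucc + 2*ε < dX j.castSucc := by
      have hgap := gXdd j i hji
      rcases abs_cases (dX j.castSucc - dX i.castSucc) with ⟨e1,e2⟩|⟨e1,e2⟩ <;> linarith
    set t : ℝ := (dY i + dX j.castSucc - ε)/2 with ht
    have h1 : dY i < t := by rw [ht]; linarith [hd2 i]
    have h2 : t + ε < dX j.castSucc := by rw [ht]; linarith [hd2 i]
    have h0' : bY i ≤ t := le_of_lt ((hbdY i).trans h1)
    have hdead : Y.pushTo bY y t i = 0 := PersistenceModule.pushTo_dead hY hbdY i h1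
    have hzero : ∑ m : Fin (N+1), B m i.castSucc • X.pushTo bX x (t + ε) m = 0 := by
      have e0 := G.comm (bY i) t (bY i + ε) (t + ε) rfl rfl h0' (y i)
      rw [hB.1 i, map_sum] at e0
      have e1 : G.maps t (t + ε) rfl (Y.trans (bY i) t h0' (y i)) = 0 := by
        rw [← Y.pushTo_of_le bY y i h0', hdead, map_zero]
      rw [e1] at e0
      have e2 : ∀ m : Fin (N+1), X.trans (bY i + ε) (t + ε) (by linarith)
          (B m i.castSucc • X.pushTo bX x (bY i + ε) m)
          = B m i.castSucc • X.pushTo bX x (t + ε) m := by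
        intro m
        rw [LinearMap.map_smul]
        by_cases hB0 : B m i.castSucc = 0
        · simp [hB0]
        · rw [X.trans_pushTo bX x (by linarith) m (hBsupp m i hB0).1]
      rw [Finset.sum_congr rfl (fun m _ => e2 m)] at e0
      exact e0.symm
    exact h0 (PersistenceModule.coords hX hbdX _ hzero j.castSucc
      (by have := (hBsupp j.castSucc i h0).1; have := hbdY i; linarith) h2)
  -- entries of diagOneZero
  have hdiagA : ∀ (j : Fin N) (i : Fin (N+1)),
      (diagOneZero : Matrix (Fin (N+1)) (Fin (N+1)) K) j.castSucc i
        = if j.castSucc = i then 1 else 0 := by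
    intro j i
    rw [diagOneZero, Matrix.diagonal_apply]
    by_cases h : j.castSucc = i
    · rw [if_pos h, if_pos h, if_neg (Fin.castSucc_lt_last j).ne]
    · rw [if_neg h, if_neg h]
  have hdiagB : ∀ (j : Fin N) (i : Fin (N+1)),
      (diagOneZero : Matrix (Fin (N+1)) (Fin (N+1)) K) i j.castSucc
        = if i = j.castSucc then 1 else 0 := by
    intro j i
    rw [diagOneZero, Matrix.diagonal_apply]
    by_cases h : i = j.castSucc
    · rw [if_pos h, if_pos h, h, if_neg (Fin.castSucc_lt_last j).ne]
    · rw [if_neg h, if_neg h]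
  have hdlast1 : ∀ i, (diagOneZero : Matrix (Fin (N+1)) (Fin (N+1)) K) (Fin.last N) i = 0 := by
    intro i
    rw [diagOneZero, Matrix.diagonal_apply]
    split <;> simp
  have hdlast2 : ∀ i, (diagOneZero : Matrix (Fin (N+1)) (Fin (N+1)) K) i (Fin.last N) = 0 := by
    intro i
    rw [diagOneZero, Matrix.diagonal_apply]
    by_cases h : i = Fin.last N
    · rw [if_pos h, if_pos h]
    · rw [if_neg h]
  -- support of the diagonal entries
  have hdsuppA : ∀ j : Fin N, bY j ≤ bX j.castSucc + ε ∧ bX j.castSucc + ε < dY j :=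
    fun j => ⟨le_of_lt (hb2 j), by linarith [n1 j, hd1 j]⟩
  have hdsuppB : ∀ j : Fin N, bX j.castSucc ≤ bY j + ε ∧ bY j + ε < dX j.castSucc :=
    fun j => ⟨le_of_lt (hb1 j), by linarith [n1 j, hb2 j]⟩
  refine ⟨?_, ⟨?_, ?_, ?_⟩, ?_, ?_, ?_, ?_⟩
  -- (1)
  · intro i
    refine ⟨?_, hA.2.2 i⟩
    refine Fin.lastCases ?_ (fun j => ?_) i
    · exact hA.2.2 _
    · exact hAlast j
  -- (2a)
  · constructor
    · intro j
      rw [Matrix.submatrix_apply]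
      exact hAdiag j
    · intro j i h0
      rw [Matrix.submatrix_apply] at h0
      exact ⟨hAbirth j i h0, hAdeath j i h0⟩
  -- (2b)
  · refine ⟨?_, ?_, hdlast1⟩
    · intro i
      refine Fin.lastCases ?_ (fun k => ?_) i
      · rw [hA.1 (Fin.last N)]
        simp [hdiagA, (Fin.castSucc_lt_last _).ne, hAlast]
      · have hRHS : (∑ j : Fin N,
            (diagOneZero : Matrix (Fin (N+1)) (Fin (N+1)) K) j.castSucc k.castSucc •
            Y.pushTo bY (transformBasis Y bY y (A.submatrix Fin.castSucc Fin.castSucc))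
              (bX k.castSucc + ε) j)
            = Y.pushTo bY (transformBasis Y bY y (A.submatrix Fin.castSucc Fin.castSucc))
                (bX k.castSucc + ε) k := by
          simp [hdiagA, Fin.castSucc_inj]
        rw [hRHS, Y.pushTo_of_le bY _ k (le_of_lt (hb2 k)), transformBasis, map_sum,
          hA.1 k.castSucc]
        refine Finset.sum_congr rfl (fun m _ => ?_)
        rw [LinearMap.map_smul, Matrix.submatrix_apply]
        by_cases hA0 : A m.castSucc k.castSucc = 0
        · simp [hA0]
        · rw [Y.trans_pushTo bY y (le_of_lt (hb2 k)) m (hAbirth m k hA0)]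
    · intro j i hni
      rw [hdiagA j i]
      by_cases h : j.castSucc = i
      · exfalso
        subst h
        exact hni (hdsuppA j)
      · rw [if_neg h]
  -- (2c)
  · refine ⟨?_, ?_, hdlast2⟩
    · intro j
      have hRHS : (∑ i : Fin (N+1),
          (diagOneZero : Matrix (Fin (N+1)) (Fin (N+1)) K) i j.castSucc •
            X.pushTo bX x (bY j + ε) i) = X.pushTo bX x (bY j + ε) j.castSucc := by
        simp [hdiagB]
      rw [hRHS]
      have hterm : ∀ k : Fin N, G.maps (bY j) (bY j + ε) rfl
          ((A.submatrix Fin.castSucc Fin.castSucc) k j • Y.pushTo bY y (bY j) k)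
          = ∑ m : Fin (N+1), (A k.castSucc j.castSucc * B m k.castSucc) •
              X.pushTo bX x (bY j + ε) m := by
        intro k
        rw [Matrix.submatrix_apply, LinearMap.map_smul]
        by_cases hA0 : A k.castSucc j.castSucc = 0
        · simp [hA0]
        · have hkj := hAbirth k j hA0
          rw [Y.pushTo_of_le bY y k hkj]
          rw [G.comm (bY k) (bY j) (bY k + ε) (bY j + ε) rfl rfl hkj (y k)]
          rw [hB.1 k, map_sum, Finset.smul_sum]
          refine Finset.sum_congr rfl (fun m _ => ?_)
          rw [LinearMap.map_smul]
          by_cases hB0 : B m k.castSucc = 0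
          · simp [hB0]
          · rw [X.trans_pushTo bX x (by linarith) m (hBsupp m k hB0).1, smul_smul]
      have hLHS : G.maps (bY j) (bY j + ε) rfl
          (transformBasis Y bY y (A.submatrix Fin.castSucc Fin.castSucc) j)
          = ∑ m : Fin (N+1), (∑ k : Fin N, A k.castSucc j.castSucc * B m k.castSucc) •
              X.pushTo bX x (bY j + ε) m := by
        rw [transformBasis, map_sum, Finset.sum_congr rfl (fun k _ => hterm k),
          Finset.sum_comm]
        exact Finset.sum_congr rfl (fun m _ => (Finset.sum_smul).symm)
      have hcoef : ∀ m : Fin (N+1),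
          (∑ k : Fin N, A k.castSucc j.castSucc * B m k.castSucc) •
            X.pushTo bX x (bY j + ε) m
          = (if m = j.castSucc then (1:K) else 0) • X.pushTo bX x (bY j + ε) m := by
        intro m
        by_cases hmb : bX m ≤ bY j + ε
        · by_cases hma : bX j.castSucc + ε + ε < dX m
          · rw [hC1 j.castSucc m (le_trans hmb (by linarith [hb2 j])) hma]
          · push_neg at hma
            rw [PersistenceModule.pushTo_dead hX hbdX m (hZ j m hmb hma), smul_zero,
              smul_zero]
        · push_neg at hmb
          rw [X.pushTo_unborn bX x m hmb, smul_zero, smul_zero]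
      rw [hLHS, Finset.sum_congr rfl (fun m _ => hcoef m)]
      simp
    · intro i j hni
      rw [hdiagB j i]
      by_cases h : i = j.castSucc
      · exfalso
        subst h
        exact hni (hdsuppB j)
      · rw [if_neg h]
  -- (3a)
  · constructor
    · intro j
      rw [Matrix.submatrix_apply]
      exact hBdiag j
    · intro j i h0
      rw [Matrix.submatrix_apply] at h0
      exact ⟨hBbirth j i h0, hBdeath j i h0⟩
  -- (3b)
  · constructor
    · intro i
      refine Fin.lastCases ?_ (fun k => ?_) i
      · have h : extendOne B (Fin.last N) (Fin.last N) = 1 := by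
          rw [extendOne]; simp
        rw [h]; exact one_ne_zero
      · have h : extendOne B k.castSucc k.castSucc = B k.castSucc k.castSucc := by
          rw [extendOne]; simp [(Fin.castSucc_lt_last k).ne]
        rw [h]; exact hBdiag k
    · intro j i h0
      by_cases hj : j = Fin.last N
      · subst hj
        by_cases hij : Fin.last N = i
        · rw [← hij]; exact ⟨le_refl _, le_refl _⟩
        · exfalso; apply h0; rw [extendOne]; simp [hij]
      · by_cases hi : i = Fin.last N
        · exfalso; apply h0; rw [extendOne]; simp [hi, hj]
        · obtain ⟨j', rfl⟩ := Fin.exists_castSucc_eq.2 hj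
          obtain ⟨i', rfl⟩ := Fin.exists_castSucc_eq.2 hi
          have h : extendOne B j'.castSucc i'.castSucc = B j'.castSucc i'.castSucc := by
            rw [extendOne]
            simp [(Fin.castSucc_lt_last j').ne, (Fin.castSucc_lt_last i').ne]
          rw [h] at h0
          exact ⟨hBbirth j' i' h0, hBdeath j' i' h0⟩
  -- (3c)
  · refine ⟨?_, ?_, hdlast1⟩
    · intro i
      refine Fin.lastCases ?_ (fun k => ?_) i
      · have hxnew : transformBasis X bX x (extendOne B) (Fin.last N) = x (Fin.last N) := by
          rw [transformBasis, Finset.sum_eq_single (Fin.last N) ?_ ?_]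
          · have h : extendOne B (Fin.last N) (Fin.last N) = 1 := by
              rw [extendOne]; simp
            rw [h, one_smul, X.pushTo_of_le bX x _ (le_refl _), X.trans_self]
            rfl
          · intro m _ hm
            have h : extendOne B m (Fin.last N) = 0 := by
              rw [extendOne]; simp [hm]
            rw [h, zero_smul]
          · intro h'; exact absurd (Finset.mem_univ _) h'
        rw [hxnew, hA.1 (Fin.last N)]
        simp [hdiagA, (Fin.castSucc_lt_last _).ne, hAlast]
      · have hxnew : transformBasis X bX x (extendOne B) k.castSucc
            = ∑ m : Fin N, B m.castSucc k.castSucc •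
                X.pushTo bX x (bX k.castSucc) m.castSucc := by
          rw [transformBasis, Fin.sum_univ_castSucc
            (f := fun m => extendOne B m k.castSucc • X.pushTo bX x (bX k.castSucc) m)]
          have hlast : extendOne B (Fin.last N) k.castSucc •
              X.pushTo bX x (bX k.castSucc) (Fin.last N) = 0 := by
            have h : extendOne B (Fin.last N) k.castSucc = 0 := by
              rw [extendOne]; simp [(Fin.castSucc_lt_last k).ne']
            rw [h, zero_smul]
          rw [hlast, add_zero]
          refine Finset.sum_congr rfl (fun m _ => ?_)
          have h : extendOne B m.castSucc k.castSucc = B m.castSucc k.castSucc := by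
            rw [extendOne]
            simp [(Fin.castSucc_lt_last m).ne, (Fin.castSucc_lt_last k).ne]
          rw [h]
        rw [hxnew, map_sum]
        have hterm : ∀ m : Fin N, F.maps (bX k.castSucc) (bX k.castSucc + ε) rfl
            (B m.castSucc k.castSucc • X.pushTo bX x (bX k.castSucc) m.castSucc)
            = ∑ l : Fin N, (B m.castSucc k.castSucc * A l.castSucc m.castSucc) •
                Y.pushTo bY y (bX k.castSucc + ε) l := by
          intro m
          rw [LinearMap.map_smul]
          by_cases hB0 : B m.castSucc k.castSucc = 0
          · simp [hB0]
          · have hmk := hBbirth m k hB0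
            rw [X.pushTo_of_le bX x m.castSucc hmk]
            rw [F.comm (bX m.castSucc) (bX k.castSucc) (bX m.castSucc + ε)
              (bX k.castSucc + ε) rfl rfl hmk (x m.castSucc)]
            rw [hA.1 m.castSucc, map_sum, Finset.smul_sum]
            refine Finset.sum_congr rfl (fun l _ => ?_)
            rw [LinearMap.map_smul]
            by_cases hA0 : A l.castSucc m.castSucc = 0
            · simp [hA0]
            · rw [Y.trans_pushTo bY y (by linarith) l (hAsupp l m.castSucc hA0).1,
                smul_smul]
        rw [Finset.sum_congr rfl (fun m _ => hterm m), Finset.sum_comm]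
        have hcomb : ∀ l : Fin N, (∑ m : Fin N,
            (B m.castSucc k.castSucc * A l.castSucc m.castSucc) •
              Y.pushTo bY y (bX k.castSucc + ε) l)
            = (∑ i' : Fin (N+1), B i' k.castSucc * A l.castSucc i') •
                Y.pushTo bY y (bX k.castSucc + ε) l := by
          intro l
          rw [← Finset.sum_smul, Fin.sum_univ_castSucc
            (f := fun i' => B i' k.castSucc * A l.castSucc i')]
          rw [hBlast k, zero_mul, add_zero]
        rw [Finset.sum_congr rfl (fun l _ => hcomb l)]
        have hcoef : ∀ l : Fin N, (∑ i' : Fin (N+1), B i' k.castSucc * A l.castSucc i') •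
            Y.pushTo bY y (bX k.castSucc + ε) l
            = (if l = k then (1:K) else 0) • Y.pushTo bY y (bX k.castSucc + ε) l := by
          intro l
          by_cases hlb : bY l ≤ bX k.castSucc + ε
          · by_cases hla : bY k + ε + ε < dY l
            · rw [hC2 k l (le_trans hlb (by linarith [hb1 k])) hla]
            · push_neg at hla
              rw [PersistenceModule.pushTo_dead hY hbdY l (hZ' k l hlb hla), smul_zero,
                smul_zero]
          · push_neg at hlb
            rw [Y.pushTo_unborn bY y l hlb, smul_zero, smul_zero]
        rw [Finset.sum_congr rfl (fun l _ => hcoef l)]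
        simp [hdiagA, Fin.castSucc_inj]
    · intro j i hni
      rw [hdiagA j i]
      by_cases h : j.castSucc = i
      · exfalso
        subst h
        exact hni (hdsuppA j)
      · rw [if_neg h]
  -- (3d)
  · refine ⟨?_, ?_, hdlast2⟩
    · intro j
      have hRHS : (∑ i : Fin (N+1),
          (diagOneZero : Matrix (Fin (N+1)) (Fin (N+1)) K) i j.castSucc •
            X.pushTo bX (transformBasis X bX x (extendOne B)) (bY j + ε) i)
          = X.pushTo bX (transformBasis X bX x (extendOne B)) (bY j + ε) j.castSucc := by
        simp [hdiagB]
      rw [hRHS, hB.1 j]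
      rw [Fin.sum_univ_castSucc
        (f := fun i => B i j.castSucc • X.pushTo bX x (bY j + ε) i)]
      rw [hBlast j, zero_smul, add_zero]
      rw [X.pushTo_of_le bX _ j.castSucc (le_of_lt (hb1 j)), transformBasis, map_sum]
      rw [Fin.sum_univ_castSucc (f := fun m => X.trans (bX j.castSucc) (bY j + ε)
        (le_of_lt (hb1 j)) (extendOne B m j.castSucc • X.pushTo bX x (bX j.castSucc) m))]
      have hlast : X.trans (bX j.castSucc) (bY j + ε) (le_of_lt (hb1 j))
          (extendOne B (Fin.last N) j.castSucc •
            X.pushTo bX x (bX j.castSucc) (Fin.last N)) = 0 := by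
        have h : extendOne B (Fin.last N) j.castSucc = 0 := by
          rw [extendOne]; simp [(Fin.castSucc_lt_last j).ne']
        rw [h, zero_smul, map_zero]
      rw [hlast, add_zero]
      refine Finset.sum_congr rfl (fun m _ => ?_)
      have h : extendOne B m.castSucc j.castSucc = B m.castSucc j.castSucc := by
        rw [extendOne]
        simp [(Fin.castSucc_lt_last m).ne, (Fin.castSucc_lt_last j).ne]
      rw [h, LinearMap.map_smul]
      by_cases hB0 : B m.castSucc j.castSucc = 0
      · simp [hB0]
      · rw [X.trans_pushTo bX x (le_of_lt (hb1 j)) m.castSucc (hBbirth m j hB0)]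
    · intro i j hni
      rw [hdiagB j i]
      by_cases h : i = j.castSucc
      · exfalso
        subst h
        exact hni (hdsuppB j)
      · rw [if_neg h]

end Statement9
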